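/- arXiv:2510.01570 — 6 statements merged into one kernel-verified Lean document; each statement's English description precedes it below -/
import Mathlib

section
/- The divergence of the vector field h(x)·ẋ, where h(I_H, I_L) = 1/(I_H·I_L) and ẋ is the bi-virus SIS mutation vector field, equals -β̂_H/I_L - q_LH/I_H² - β̂_L/I_H - q_HL/I_L², which is strictly negative for all (I_H, I_L) ∈ (0,1)². -/
lemma deriv_aux (a K c d : ℝ) (x : ℝ) (hx : x ≠ 0) :
    deriv (fun t : ℝ => a * (1 - t - K) + c / t - d) x = -a - c / x ^ 2 := by
  have h1 : HasDerivAt (fun t : ℝ => a * (1 - t - K)) (-a) x := by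
    have := (((hasDerivAt_id x).const_sub (1:ℝ)).sub_const K).const_mul a
    simpa using this
  have h2 : HasDerivAt (fun t : ℝ => c / t) (-(c / x ^ 2)) x := by
    have h := ((hasDerivAt_id x).inv hx).const_mul c
    simp only [id, Pi.inv_apply] at h
    have : (fun t : ℝ => c * t⁻¹) = fun t : ℝ => c / t := by
      ext t; rw [div_eq_mul_inv]
    rw [this] at h
    exact h.congr_deriv (by ring)
  have := (h1.add h2).sub_const d
  exact this.deriv.trans (by ring)

theorem dulac_divergence_negative
    (βH βL γH γL qHL qLH : ℝ)
    (hβH : 0 < βH) (hβL : 0 < βL) (hγH : 0 < γH) (hγL : 0 < γL)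
    (hqHL : 0 < qHL) (hqLH : 0 < qLH)
    (IH IL : ℝ) (hIH : IH ∈ Set.Ioo (0:ℝ) 1) (hIL : IL ∈ Set.Ioo (0:ℝ) 1) :
    deriv (fun x : ℝ => βH / IL * (1 - x - IL) + qLH / x - (qHL + γH) / IL) IH
      + deriv (fun y : ℝ => βL / IH * (1 - IH - y) + qHL / y - (qLH + γL) / IH) IL
    = -(βH / IL) - qLH / IH ^ 2 - βL / IH - qHL / IL ^ 2 ∧
    -(βH / IL) - qLH / IH ^ 2 - βL / IH - qHL / IL ^ 2 < 0 := by
  obtain ⟨hIH0, hIH1⟩ := hIH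
  obtain ⟨hIL0, hIL1⟩ := hIL
  have d1 := deriv_aux (βH / IL) IL qLH ((qHL + γH) / IL) IH hIH0.ne'
  have e2 : (fun y : ℝ => βL / IH * (1 - IH - y) + qHL / y - (qLH + γL) / IH)
      = (fun y : ℝ => βL / IH * (1 - y - IH) + qHL / y - (qLH + γL) / IH) := by
    ext y; ring
  have d2 := deriv_aux (βL / IH) IH qHL ((qLH + γL) / IH) IL hIL0.ne'
  rw [d1, e2, d2]
  constructor
  · ring
  · have h1 : 0 < βH / IL := div_pos hβH hIL0
    have h2 : 0 < qLH / IH ^ 2 := div_pos hqLH (pow_pos hIH0 2)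
    have h3 : 0 < βL / IH := div_pos hβL hIH0
    have h4 : 0 < qHL / IL ^ 2 := div_pos hqHL (pow_pos hIL0 2)
    linarith
end

section
/- Under Assumption (max(q_LH + γ_L, q_HL + γ_H) ≤ min(β̂_H, β̂_L)), the trace of the Jacobian at the disease-free equilibrium, (β̂_H - γ_H - q_HL) + (β̂_L - γ_L - q_LH), is nonnegative; consequently the largest eigenvalue of the Jacobian is nonnegative. -/
theorem dfe_jacobian_trace_nonneg
    (βH βL γH γL qHL qLH : ℝ)
    (hβH : 0 < βH) (hβL : 0 < βL) (hγH : 0 < γH) (hγL : 0 < γL)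
    (hqHL : 0 ≤ qHL) (hqLH : 0 ≤ qLH)
    (hassump : max (qLH + γL) (qHL + γH) ≤ min βH βL) :
    (βH - γH - qHL) + (βL - γL - qLH) ≥ 0 ∧
    ∃ μ : ℝ, μ ∈ spectrum ℝ
        (Matrix.of ![![βH - γH - qHL, qLH], ![qHL, βL - γL - qLH]]) ∧ 0 ≤ μ := by
  have h1 : qHL + γH ≤ βH := le_trans (le_trans (le_max_right _ _) hassump) (min_le_left _ _)
  have h2 : qLH + γL ≤ βL := le_trans (le_trans (le_max_left _ _) hassump) (min_le_right _ _)
  set a : ℝ := βH - γH - qHL with ha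
  set d : ℝ := βL - γL - qLH with hd
  have htr : a + d ≥ 0 := by simp only [ha, hd]; linarith
  refine ⟨htr, ?_⟩
  set D : ℝ := (a - d) ^ 2 + 4 * (qHL * qLH) with hD
  have hDnn : 0 ≤ D := by positivity
  set μ : ℝ := ((a + d) + Real.sqrt D) / 2 with hμ
  have hsq : Real.sqrt D ^ 2 = D := Real.sq_sqrt hDnn
  refine ⟨μ, ?_, ?_⟩
  · rw [spectrum.mem_iff]
    intro hunit
    rw [Matrix.isUnit_iff_isUnit_det, isUnit_iff_ne_zero] at hunit
    apply hunit
    have : (algebraMap ℝ (Matrix (Fin 2) (Fin 2) ℝ)) μ -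
        Matrix.of ![![a, qLH], ![qHL, d]] =
        Matrix.of ![![μ - a, -qLH], ![-qHL, μ - d]] := by
      ext i j
      fin_cases i <;> fin_cases j <;>
        simp [Matrix.algebraMap_eq_diagonal, Matrix.diagonal]
    rw [this, Matrix.det_fin_two_of]
    have : (μ - a) * (μ - d) = qHL * qLH := by
      have expand : (μ - a) * (μ - d) = μ ^ 2 - (a + d) * μ + a * d := by ring
      rw [expand, hμ]
      field_simp
      nlinarith [hsq]
    rw [this]; ring
  · rw [hμ]
    have := Real.sqrt_nonneg D
    linarith
end

section
/- When mutation occurs only from strain L to strain H (q_HL = 0, q_LH > 0), under the assumption β_H/γ_H > β_L/γ_L, there is no coexistence equilibrium: the candidate point with I_H* = q_LH·N/(w·D₂) and I_L* = -N·(D₂ + β_L·q_LH)/(β̂_L·D₂), where N = γ_L + q_LH - β̂_L and D₂ = β_H·γ_L - β_L·γ_H + β_H·q_LH - β_L·q_LH, cannot have both I_H* > 0 and I_L* > 0. -/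
theorem no_coexistence_L_to_H
    (βH βL γH γL qLH α zS : ℝ)
    (hβH : 0 < βH) (hβL : 0 < βL) (hγH : 0 < γH) (hγL : 0 < γL)
    (hqLH : 0 < qLH) (hα : α ∈ Set.Ioo (0:ℝ) 1) (hzS : zS ∈ Set.Icc (0:ℝ) 1)
    (hrepro : βH / γH > βL / γL)
    (w : ℝ) (hw : w = α * zS + 1 - zS)
    (βLhat : ℝ) (hβLhat : βLhat = βL * w)
    (N D2 : ℝ) (hN : N = γL + qLH - βLhat)
    (hD2 : D2 = βH * γL - βL * γH + βH * qLH - βL * qLH) (hD2ne : D2 ≠ 0) :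
    ¬ (0 < qLH * N / (w * D2) ∧ 0 < -N * (D2 + βL * qLH) / (βLhat * D2)) := by
  rintro ⟨h1, h2⟩
  have hw0 : 0 < w := by
    rw [hw]; nlinarith [hα.1, hα.2, hzS.1, hzS.2]
  have hcross : βL * γH < βH * γL := by
    have h := (div_lt_div_iff₀ hγL hγH).mp hrepro
    nlinarith
  have hDk : 0 < D2 + βL * qLH := by rw [hD2]; nlinarith
  have hβLhat0 : 0 < βLhat := by rw [hβLhat]; positivity
  rcases div_pos_iff.mp h1 with ⟨ha, hb⟩ | ⟨ha, hb⟩ <;>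
    rcases div_pos_iff.mp h2 with ⟨hc, hd⟩ | ⟨hc, hd⟩ <;>
      nlinarith [mul_pos hβLhat0 hDk, mul_pos hw0 hqLH]
end

section
/- For uni-directional mutation from H to L (q_LH = 0), the point E₃ = (S*, I_H*, I_L*) with S* = (γ_H + q_HL)/β̂_H, I_H* = N_H·(-D₁ + β_H·q_HL)/(β̂_H·D₁), and I_L* = -q_HL·N_H/(w·D₁), where N_H = γ_H + q_HL - β̂_H and D₁ = β_H·γ_L - β_L·γ_H + (β_H - β_L)·q_HL, is an equilibrium of the dynamics: both dI_H/dt and dI_L/dt vanish at this point. -/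
theorem E3_is_equilibrium
    (βH βL γH γL qHL α zS : ℝ)
    (hβH : 0 < βH) (hβL : 0 < βL) (hγH : 0 < γH) (hγL : 0 < γL)
    (hqHL : 0 < qHL)
    (w : ℝ) (hw : w = α * zS + 1 - zS) (hwpos : 0 < w)
    (βHhat βLhat : ℝ) (hβHhat : βHhat = βH * w) (hβLhat : βLhat = βL * w)
    (NH D1 : ℝ) (hNH : NH = γH + qHL - βHhat)
    (hD1 : D1 = βH * γL - βL * γH + (βH - βL) * qHL) (hD1ne : D1 ≠ 0)
    (IH IL : ℝ)
    (hIH : IH = NH * (-D1 + βH * qHL) / (βHhat * D1))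
    (hIL : IL = -qHL * NH / (w * D1)) :
    βHhat * IH * (1 - IH - IL) - (qHL + γH) * IH = 0 ∧
    βLhat * IL * (1 - IH - IL) + qHL * IH - γL * IL = 0 := by
  have hwne : w ≠ 0 := ne_of_gt hwpos
  have hβHhatne : βHhat ≠ 0 := by rw [hβHhat]; positivity
  subst hIH hIL hNH hβHhat hβLhat
  constructor <;> (field_simp; subst hD1; ring)
end

section
/- For uni-directional mutation from H to L, the coexistence equilibrium E₃ has both infected proportions strictly positive if and only if β̂_H/(γ_H + q_HL) > 1 and q_HL < β_H·γ_L/β_L - γ_H. -/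
theorem coexistence_iff
    (βH βL γH γL qHL w : ℝ)
    (hβ : βH > βL) (hβL : 0 < βL) (hγH : 0 < γH) (hγL : 0 < γL)
    (hqHL : 0 < qHL) (hw : 0 < w)
    (hrepro : βH * γL > βL * γH)
    (βHhat : ℝ) (hβHhat : βHhat = βH * w)
    (NH D1 : ℝ) (hNH : NH = γH + qHL - βHhat)
    (hD1 : D1 = βH * γL - βL * γH + (βH - βL) * qHL)
    (IH IL : ℝ)
    (hIH : IH = NH * (-D1 + βH * qHL) / (βHhat * D1))
    (hIL : IL = -qHL * NH / (w * D1)) :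
    (0 < IH ∧ 0 < IL) ↔ (βHhat / (γH + qHL) > 1 ∧ qHL < βH * γL / βL - γH) := by
  have hβH : 0 < βH := lt_trans hβL hβ
  have hD1pos : 0 < D1 := by nlinarith
  have hβHhatpos : 0 < βHhat := by rw [hβHhat]; positivity
  have hden : 0 < βHhat * D1 := mul_pos hβHhatpos hD1pos
  have hwD : 0 < w * D1 := mul_pos hw hD1pos
  have hγq : 0 < γH + qHL := by linarith
  constructor
  · rintro ⟨h1, h2⟩
    have hNHneg : NH < 0 := by
      by_contra h
      push_neg at h
      have : IL ≤ 0 := by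
        rw [hIL]
        apply div_nonpos_of_nonpos_of_nonneg
        · nlinarith
        · linarith
      linarith
    constructor
    · rw [gt_iff_lt, one_lt_div hγq]
      linarith [hNH ▸ hNHneg]
    · have hx : 0 < NH * (-D1 + βH * qHL) := by
        have := (div_pos_iff.mp (hIH ▸ h1))
        rcases this with ⟨h, _⟩ | ⟨_, h⟩
        · exact h
        · linarith
      have hneg : -D1 + βH * qHL < 0 := by nlinarith
      rw [lt_sub_iff_add_lt, lt_div_iff₀ hβL]
      nlinarith
  · rintro ⟨h1, h2⟩
    rw [gt_iff_lt, one_lt_div hγq] at h1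
    have hNHneg : NH < 0 := by rw [hNH]; linarith
    rw [lt_sub_iff_add_lt, lt_div_iff₀ hβL] at h2
    have hneg : -D1 + βH * qHL < 0 := by nlinarith
    constructor
    · rw [hIH]
      apply div_pos _ hden
      nlinarith
    · rw [hIL]
      apply div_pos _ hwD
      nlinarith
end

section
/- For a 2×2 matrix M = Λ + N, where Λ is diagonal with strictly negative entries and N is an irreducible nonnegative matrix, the stability modulus of M is strictly negative if and only if the spectral radius of -Λ⁻¹·N is strictly less than 1. -/
lemma mem_spec_iff (M : Matrix (Fin 2) (Fin 2) ℝ) (μ : ℂ) :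
    μ ∈ spectrum ℂ (M.map (Complex.ofReal ·)) ↔
    (μ - (M 0 0 : ℝ)) * (μ - (M 1 1 : ℝ)) - (M 0 1 : ℝ) * (M 1 0 : ℝ) = 0 := by
  rw [spectrum.mem_iff, Matrix.isUnit_iff_isUnit_det, isUnit_iff_ne_zero, not_ne_iff,
    Matrix.det_fin_two]
  simp [Matrix.algebraMap_matrix_apply, Matrix.map_apply]
lemma quad_roots (s q : ℝ) (h : 0 ≤ s^2 - 4*q) (μ : ℂ)
    (hμ : μ^2 - s*μ + q = 0) :
    μ = (((s + Real.sqrt (s^2-4*q))/2 : ℝ) : ℂ) ∨ μ = (((s - Real.sqrt (s^2-4*q))/2 : ℝ) : ℂ) := by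
  have hD2 : (Real.sqrt (s^2-4*q))^2 = s^2 - 4*q := Real.sq_sqrt h
  have hD2C : ((Real.sqrt (s^2-4*q):ℝ):ℂ)^2 = (s:ℂ)^2 - 4*(q:ℂ) := by
    exact_mod_cast congrArg (Complex.ofReal ·) hD2
  have key : (μ - ((s:ℂ)+(Real.sqrt (s^2-4*q):ℝ))/2) * (μ - ((s:ℂ)-(Real.sqrt (s^2-4*q):ℝ))/2) = 0 := by
    linear_combination hμ - (1/4) * hD2C
  rcases mul_eq_zero.mp key with h' | h'
  · left; push_cast; linear_combination h'
  · right; push_cast; linear_combination h'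

lemma root_is_root (m00 m11 c : ℝ) (h : 0 ≤ (m00+m11)^2 - 4*(m00*m11-c)) (sgn : ℝ)
    (hsgn : sgn = 1 ∨ sgn = -1) :
    ((((m00+m11 + sgn * Real.sqrt ((m00+m11)^2-4*(m00*m11-c)))/2 : ℝ) : ℂ) - (m00:ℂ)) *
      ((((m00+m11 + sgn * Real.sqrt ((m00+m11)^2-4*(m00*m11-c)))/2 : ℝ) : ℂ) - (m11:ℂ)) - (c:ℂ) = 0 := by
  have hD2 : (Real.sqrt ((m00+m11)^2-4*(m00*m11-c)))^2 = (m00+m11)^2 - 4*(m00*m11-c) := Real.sq_sqrt h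
  have hr : ((m00+m11 + sgn * Real.sqrt ((m00+m11)^2-4*(m00*m11-c)))/2 - m00) *
      ((m00+m11 + sgn * Real.sqrt ((m00+m11)^2-4*(m00*m11-c)))/2 - m11) - c = 0 := by
    rcases hsgn with h1 | h1 <;> subst h1 <;> nlinarith [hD2]
  exact_mod_cast congrArg (Complex.ofReal ·) hr

lemma stab_iff (m00 m11 c : ℝ) (hc : 0 < c) :
    (∀ μ : ℂ, (μ - (m00:ℂ)) * (μ - (m11:ℂ)) - (c:ℂ) = 0 → μ.re < 0) ↔
    (m00 + m11 < 0 ∧ m00 * m11 - c > 0) := by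
  have hdisc : 0 ≤ (m00+m11)^2 - 4*(m00*m11-c) := by nlinarith [sq_nonneg (m00-m11), hc]
  have hD2 : (Real.sqrt ((m00+m11)^2-4*(m00*m11-c)))^2 = (m00+m11)^2 - 4*(m00*m11-c) :=
    Real.sq_sqrt hdisc
  have hDnn := Real.sqrt_nonneg ((m00+m11)^2-4*(m00*m11-c))
  constructor
  · intro H
    have hp := H _ (root_is_root m00 m11 c hdisc 1 (Or.inl rfl))
    have hm := H _ (root_is_root m00 m11 c hdisc (-1) (Or.inr rfl))
    rw [Complex.ofReal_re] at hp hm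
    constructor <;> nlinarith [hp, hm]
  · rintro ⟨h1, h2⟩ μ hμ
    have hμ' : μ^2 - ((m00+m11 : ℝ):ℂ)*μ + ((m00*m11-c : ℝ):ℂ) = 0 := by
      push_cast; linear_combination hμ
    have hDlt : Real.sqrt ((m00+m11)^2-4*(m00*m11-c)) < -(m00+m11) := by nlinarith
    rcases quad_roots (m00+m11) (m00*m11-c) hdisc μ hμ' with h' | h' <;>
      rw [h', Complex.ofReal_re] <;> nlinarith

lemma rad_iff (a00 a11 c : ℝ) (hc : 0 < c) (h00 : 0 ≤ a00) (h11 : 0 ≤ a11) :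
    (∀ μ : ℂ, (μ - (a00:ℂ)) * (μ - (a11:ℂ)) - (c:ℂ) = 0 → ‖μ‖ < 1) ↔
    (a00 < 1 ∧ a11 < 1 ∧ (1 - a00) * (1 - a11) - c > 0) := by
  have hdisc : 0 ≤ (a00+a11)^2 - 4*(a00*a11-c) := by nlinarith [sq_nonneg (a00-a11), hc]
  have hD2 : (Real.sqrt ((a00+a11)^2-4*(a00*a11-c)))^2 = (a00+a11)^2 - 4*(a00*a11-c) :=
    Real.sq_sqrt hdisc
  have hDnn := Real.sqrt_nonneg ((a00+a11)^2-4*(a00*a11-c))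
  have hDge1 : a00 - a11 ≤ Real.sqrt ((a00+a11)^2-4*(a00*a11-c)) := by nlinarith [sq_nonneg (a00-a11), hc]
  have hDge2 : a11 - a00 ≤ Real.sqrt ((a00+a11)^2-4*(a00*a11-c)) := by nlinarith [sq_nonneg (a00-a11), hc]
  constructor
  · intro H
    have hp := H _ (root_is_root a00 a11 c hdisc 1 (Or.inl rfl))
    have hm := H _ (root_is_root a00 a11 c hdisc (-1) (Or.inr rfl))
    rw [Complex.norm_real, Real.norm_eq_abs, abs_lt] at hp hm
    refine ⟨by nlinarith [hp.2], by nlinarith [hp.2], ?_⟩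
    nlinarith [hp.2, hm.2]
  · rintro ⟨h1, h2, h3⟩ μ hμ
    have hμ' : μ^2 - ((a00+a11 : ℝ):ℂ)*μ + ((a00*a11-c : ℝ):ℂ) = 0 := by
      push_cast; linear_combination hμ
    have hlt1 : Real.sqrt ((a00+a11)^2-4*(a00*a11-c)) < 2 - (a00+a11) := by nlinarith [sq_nonneg (a00-a11), hc]
    have hgt1 : Real.sqrt ((a00+a11)^2-4*(a00*a11-c)) < 2 + (a00+a11) := by nlinarith [sq_nonneg (a00-a11), hc]
    rcases quad_roots (a00+a11) (a00*a11-c) hdisc μ hμ' with h' | h' <;>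
      rw [h', Complex.norm_real, Real.norm_eq_abs, abs_lt] <;> constructor <;> nlinarith

theorem stability_modulus_iff_spectral_radius
    (Λ N : Matrix (Fin 2) (Fin 2) ℝ)
    (d : Fin 2 → ℝ) (hΛ : Λ = Matrix.diagonal d) (hd : ∀ i, d i < 0)
    (hN : ∀ i j, 0 ≤ N i j) (hirr : 0 < N 0 1 ∧ 0 < N 1 0) :
    ((∀ μ : ℂ, μ ∈ spectrum ℂ ((Λ + N).map (Complex.ofReal ·)) → μ.re < 0) ↔
      (∀ μ : ℂ, μ ∈ spectrum ℂ ((-(Λ⁻¹ * N)).map (Complex.ofReal ·)) →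
        ‖μ‖ < 1)) := by
  obtain ⟨h01, h10⟩ := hirr
  have hd0 := hd 0
  have hd1 := hd 1
  have hd0' : d 0 ≠ 0 := ne_of_lt hd0
  have hd1' : d 1 ≠ 0 := ne_of_lt hd1
  have he0 : (d 0)⁻¹ < 0 := inv_lt_zero.mpr hd0
  have he1 : (d 1)⁻¹ < 0 := inv_lt_zero.mpr hd1
  have he0m : d 0 * (d 0)⁻¹ = 1 := mul_inv_cancel₀ hd0'
  have he1m : d 1 * (d 1)⁻¹ = 1 := mul_inv_cancel₀ hd1'
  have hΛinv : Λ⁻¹ = Matrix.diagonal (fun i => (d i)⁻¹) := by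
    rw [hΛ]
    apply Matrix.inv_eq_right_inv
    rw [Matrix.diagonal_mul_diagonal]
    have : (fun i => d i * (d i)⁻¹) = fun _ => (1:ℝ) := by
      funext i
      exact mul_inv_cancel₀ (ne_of_lt (hd i))
    rw [this, Matrix.diagonal_one]
  have hM00 : (Λ + N) 0 0 = d 0 + N 0 0 := by simp [hΛ]
  have hM01 : (Λ + N) 0 1 = N 0 1 := by simp [hΛ]
  have hM10 : (Λ + N) 1 0 = N 1 0 := by simp [hΛ]
  have hM11 : (Λ + N) 1 1 = d 1 + N 1 1 := by simp [hΛ]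
  have hA : ∀ i j, (-(Λ⁻¹ * N)) i j = -((d i)⁻¹ * N i j) := by
    intro i j
    rw [hΛinv]
    simp [Matrix.mul_apply, Matrix.diagonal, Finset.sum_ite_eq]
  have key1 : (∀ μ : ℂ, μ ∈ spectrum ℂ ((Λ + N).map (Complex.ofReal ·)) → μ.re < 0) ↔
      ((d 0 + N 0 0) + (d 1 + N 1 1) < 0 ∧
        (d 0 + N 0 0) * (d 1 + N 1 1) - N 0 1 * N 1 0 > 0) := by
    rw [← stab_iff (d 0 + N 0 0) (d 1 + N 1 1) (N 0 1 * N 1 0) (mul_pos h01 h10)]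
    refine forall_congr' fun μ => ?_
    rw [mem_spec_iff, hM00, hM01, hM10, hM11]
    constructor <;> intro h h' <;> apply h <;> push_cast at h' ⊢ <;> linear_combination h'
  have hc' : 0 < (-((d 0)⁻¹ * N 0 1)) * (-((d 1)⁻¹ * N 1 0)) := by
    apply mul_pos <;> [skip; skip] <;>
      exact neg_pos.mpr (mul_neg_of_neg_of_pos (by assumption) (by assumption))
  have key2 : (∀ μ : ℂ, μ ∈ spectrum ℂ ((-(Λ⁻¹ * N)).map (Complex.ofReal ·)) →
        ‖μ‖ < 1) ↔
      (-((d 0)⁻¹ * N 0 0) < 1 ∧ -((d 1)⁻¹ * N 1 1) < 1 ∧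
        (1 - -((d 0)⁻¹ * N 0 0)) * (1 - -((d 1)⁻¹ * N 1 1)) -
          (-((d 0)⁻¹ * N 0 1)) * (-((d 1)⁻¹ * N 1 0)) > 0) := by
    rw [← rad_iff (-((d 0)⁻¹ * N 0 0)) (-((d 1)⁻¹ * N 1 1))
      ((-((d 0)⁻¹ * N 0 1)) * (-((d 1)⁻¹ * N 1 0))) hc'
      (by nlinarith [hN 0 0]) (by nlinarith [hN 1 1])]
    refine forall_congr' fun μ => ?_
    rw [mem_spec_iff, hA 0 0, hA 0 1, hA 1 0, hA 1 1]
    constructor <;> intro h h' <;> apply h <;> push_cast at h' ⊢ <;> linear_combination h'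
  rw [key1, key2]
  have hkey : (1 - -((d 0)⁻¹ * N 0 0)) * (1 - -((d 1)⁻¹ * N 1 1)) -
      (-((d 0)⁻¹ * N 0 1)) * (-((d 1)⁻¹ * N 1 0))
      = ((d 0 + N 0 0) * (d 1 + N 1 1) - N 0 1 * N 1 0) / (d 0 * d 1) := by
    field_simp
    ring
  have hdd : 0 < d 0 * d 1 := mul_pos_of_neg_of_neg hd0 hd1
  constructor
  · rintro ⟨h1, h2⟩
    have hA0 : d 0 + N 0 0 < 0 := by nlinarith [mul_pos h01 h10]
    have hB0 : d 1 + N 1 1 < 0 := by nlinarith [mul_pos h01 h10]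
    refine ⟨?_, ?_, ?_⟩
    · nlinarith [mul_lt_mul_of_pos_left hA0 (show (0:ℝ) < -(d 0)⁻¹ by linarith), he0m]
    · nlinarith [mul_lt_mul_of_pos_left hB0 (show (0:ℝ) < -(d 1)⁻¹ by linarith), he1m]
    · rw [gt_iff_lt, hkey]
      exact div_pos h2 hdd
  · rintro ⟨h1, h2, h3⟩
    have id0 : (d 0)⁻¹ * N 0 0 * d 0 = N 0 0 := by field_simp
    have id1 : (d 1)⁻¹ * N 1 1 * d 1 = N 1 1 := by field_simp
    have hA0 : d 0 + N 0 0 < 0 := by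
      have H := mul_lt_mul_of_pos_right h1 (show (0:ℝ) < -(d 0) by linarith)
      linarith [H, id0]
    have hB0 : d 1 + N 1 1 < 0 := by
      have H := mul_lt_mul_of_pos_right h2 (show (0:ℝ) < -(d 1) by linarith)
      linarith [H, id1]
    refine ⟨by linarith, ?_⟩
    rw [hkey] at h3
    have := mul_pos h3 hdd
    rw [div_mul_cancel₀ _ (ne_of_gt hdd)] at this
    exact this
end
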